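/- Let (L, [−,−]) be a Leibniz algebra over a field F, λ, μ : L → L linear maps and s ∈ L, with bi-affine bracket {x,y} = [x,y] + λ(x) + μ(y) + s. Let H ⊆ L be a linear subspace and a ∈ L, and consider the affine subspace B = a + H. Then {x,y} ∈ B for all x, y ∈ B if and only if H is closed under [−,−] (i.e. [u,v] ∈ H for all u, v ∈ H) and the following three conditions hold: (1) [a,a] − a + λ(a) + μ(a) + s ∈ H; (2) λ(u) + [u,a] ∈ H for all u ∈ H; (3) μ(u) + [a,u] ∈ H for all u ∈ H. -/
import Mathlib


/-- Characterization of Leibniz subaffgebras: for a Leibniz algebra `(L, B)` with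
bi-affine bracket `{x,y} = B x y + lam x + mu y + s`, the affine subspace `a + H`
(for a linear subspace `H` and `a ∈ L`) is closed under `{−,−}` if and only if `H`
is closed under `B` and the three conditions (1)–(3) hold. -/
theorem leibniz_subaffgebra_characterization
    {F L : Type*} [Field F] [AddCommGroup L] [Module F L]
    (B : L →ₗ[F] L →ₗ[F] L)
    (leib : ∀ a b c : L, B (B a b) c = B (B a c) b + B a (B b c))
    (lam mu : L →ₗ[F] L) (s : L)
    (br : L → L → L) (hbr : ∀ x y, br x y = B x y + lam x + mu y + s)
    (H : Submodule F L) (a : L) :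
    (∀ x y : L, x - a ∈ H → y - a ∈ H → br x y - a ∈ H) ↔
      ((∀ u ∈ H, ∀ v ∈ H, B u v ∈ H) ∧
       B a a - a + lam a + mu a + s ∈ H ∧
       (∀ u ∈ H, lam u + B u a ∈ H) ∧
       (∀ u ∈ H, mu u + B a u ∈ H)) := by
  constructor
  · intro h
    have h1 : B a a - a + lam a + mu a + s ∈ H := by
      have := h a a (by simp) (by simp)
      rw [hbr] at this
      have e : B a a - a + lam a + mu a + s = B a a + lam a + mu a + s - a := by abel
      rwa [e]
    have h2 : ∀ u ∈ H, lam u + B u a ∈ H := by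
      intro u hu
      have hk := h (a + u) a (by simpa) (by simp)
      rw [hbr] at hk
      have e : lam u + B u a =
          (B (a + u) a + lam (a + u) + mu a + s - a) -
            (B a a - a + lam a + mu a + s) := by
        simp only [map_add, LinearMap.add_apply]
        abel
      rw [e]
      exact H.sub_mem hk h1
    have h3 : ∀ u ∈ H, mu u + B a u ∈ H := by
      intro u hu
      have hk := h a (a + u) (by simp) (by simpa)
      rw [hbr] at hk
      have e : mu u + B a u =
          (B a (a + u) + lam a + mu (a + u) + s - a) -
            (B a a - a + lam a + mu a + s) := by
        simp only [map_add, LinearMap.add_apply]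
        abel
      rw [e]
      exact H.sub_mem hk h1
    refine ⟨?_, h1, h2, h3⟩
    intro u hu v hv
    have hk := h (a + u) (a + v) (by simpa) (by simpa)
    rw [hbr] at hk
    have e : B u v =
        (B (a + u) (a + v) + lam (a + u) + mu (a + v) + s - a) -
          (B a a - a + lam a + mu a + s) - (lam u + B u a) - (mu v + B a v) := by
      simp only [map_add, LinearMap.add_apply]
      abel
    rw [e]
    exact H.sub_mem (H.sub_mem (H.sub_mem hk h1) (h2 u hu)) (h3 v hv)
  · rintro ⟨hB, h1, h2, h3⟩ x y hx hy
    have e : br x y - a =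
        (B a a - a + lam a + mu a + s) + (lam (x - a) + B (x - a) a) +
          (mu (y - a) + B a (y - a)) + B (x - a) (y - a) := by
      rw [hbr]
      simp only [map_sub, LinearMap.sub_apply]
      abel
    rw [e]
    exact H.add_mem (H.add_mem (H.add_mem h1 (h2 _ hx)) (h3 _ hy)) (hB _ hx _ hy)
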